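/- Let L* be a d-subspace of ℝ^D with d ≥ 1, let X̃_in be a D × N_in real matrix whose columns are unit vectors lying in L* and spanning L*, and let X̃_out be a D × N_out real matrix (N_out ≥ 1) whose columns are unit vectors. Let λ_1 ≥ λ_2 ≥ … ≥ λ_D denote the eigenvalues of the symmetric matrix X̃_in X̃_inᵀ and set κ = λ_1/λ_d (note λ_d > 0 since the columns of X̃_in span L*). Fix γ ∈ (0, π/2). If N_in/N_out > d κ / cos(γ), then cos(γ) · λ_d − √(N_out) · ‖X̃_out‖₂ > 0, where ‖·‖₂ denotes the spectral (operator ℓ² → ℓ²) norm. In particular, λ_d ≥ N_in/(d κ) and ‖X̃_out‖₂ ≤ √(N_out). -/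

import Mathlib

open Module

/-- The spectral (operator `ℓ² → ℓ²`) norm of a matrix. -/
noncomputable def specNorm {m n : ℕ} (A : Matrix (Fin m) (Fin n) ℝ) : ℝ :=
  ‖LinearMap.toContinuousLinearMap (Matrix.toEuclideanLin A)‖

private lemma stmt10_card_le {E : Type*} [NormedAddCommGroup E] [InnerProductSpace ℝ E]
    [FiniteDimensional ℝ E] {k : ℕ} (W : Submodule ℝ E) (v : Fin k → E)
    (hv : LinearIndependent ℝ v) (hm : ∀ i, v i ∈ W) : k ≤ finrank ℝ W := by
  have h : LinearIndependent ℝ (fun i => (⟨v i, hm i⟩ : W)) :=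
    LinearIndependent.of_comp W.subtype hv
  simpa using h.fintype_card_le_finrank

private lemma stmt10_specNorm_le {D Nout : ℕ} (Xout : Matrix (Fin D) (Fin Nout) ℝ)
    (hXoutUnit : ∀ j, ∑ i, (Xout i j) ^ 2 = 1) :
    specNorm Xout ≤ Real.sqrt Nout := by
  apply ContinuousLinearMap.opNorm_le_bound _ (Real.sqrt_nonneg _)
  intro v
  have hv : ‖v‖ ^ 2 = ∑ j, (v j) ^ 2 := by
    rw [EuclideanSpace.norm_eq, Real.sq_sqrt (by positivity)]
    simp [sq_abs]
  have hnn : (0:ℝ) ≤ Real.sqrt Nout * ‖v‖ := by positivity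
  rw [← Real.sqrt_sq
        (norm_nonneg (LinearMap.toContinuousLinearMap (Matrix.toEuclideanLin Xout) v)),
      ← Real.sqrt_sq hnn]
  apply Real.sqrt_le_sqrt
  have hn2 : ‖(LinearMap.toContinuousLinearMap (Matrix.toEuclideanLin Xout) v)‖ ^ 2
      = ∑ i, (∑ j, Xout i j * v j) ^ 2 := by
    rw [show (LinearMap.toContinuousLinearMap (Matrix.toEuclideanLin Xout) v :
          EuclideanSpace ℝ (Fin D)) = Matrix.toEuclideanLin Xout v from rfl,
      EuclideanSpace.norm_eq, Real.sq_sqrt (by positivity)]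
    simp only [Real.norm_eq_abs, sq_abs]
    rfl
  rw [hn2, mul_pow, Real.sq_sqrt (Nat.cast_nonneg _), hv]
  calc ∑ i, (∑ j, Xout i j * v j) ^ 2
      ≤ ∑ i, (∑ j, (Xout i j) ^ 2) * (∑ j, (v j) ^ 2) := by
        apply Finset.sum_le_sum
        intro i _
        exact Finset.sum_mul_sq_le_sq_mul_sq _ _ _
    _ = (Nout : ℝ) * ∑ j, (v j) ^ 2 := by
        rw [← Finset.sum_mul]
        congr 1
        rw [Finset.sum_comm]
        simp [hXoutUnit]

/-- Let the columns of `X̃_in` be unit vectors spanning the `d`-subspace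
`L*`, let the columns of `X̃_out` be unit vectors, let `μ` be an antitone listing of the
eigenvalues of `X̃_in X̃_inᵀ` (with orthonormal eigenbasis `bb`), so `λ_1 = μ 0`,
`λ_d = μ (d-1)`, and `κ = λ_1 / λ_d`. If `N_in / N_out > d κ / cos γ` for `γ ∈ (0, π/2)`,
then `cos γ · λ_d − √N_out · ‖X̃_out‖₂ > 0`; in particular `λ_d ≥ N_in/(d κ)` and
`‖X̃_out‖₂ ≤ √N_out`. -/
theorem stmt_10 (D d Nin Nout : ℕ) (hd : 1 ≤ d) (hdD : d ≤ D) (hNout : 1 ≤ Nout)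
    (Lstar : Submodule ℝ (EuclideanSpace ℝ (Fin D)))
    (hLstar : finrank ℝ Lstar = d)
    (Xin : Matrix (Fin D) (Fin Nin) ℝ)
    (hXinUnit : ∀ j, ∑ i, (Xin i j) ^ 2 = 1)
    (hXinSpan : Submodule.span ℝ
      (Set.range fun j => (EuclideanSpace.equiv (Fin D) ℝ).symm fun i => Xin i j) = Lstar)
    (Xout : Matrix (Fin D) (Fin Nout) ℝ)
    (hXoutUnit : ∀ j, ∑ i, (Xout i j) ^ 2 = 1)
    (μ : Fin D → ℝ) (hμ : Antitone μ)
    (bb : OrthonormalBasis (Fin D) ℝ (EuclideanSpace ℝ (Fin D)))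
    (heig : ∀ i, Matrix.toEuclideanLin (Xin * Xin.transpose) (bb i) = μ i • bb i)
    (γ : ℝ) (hγ : γ ∈ Set.Ioo 0 (Real.pi / 2))
    (hSNR : (d : ℝ) * (μ ⟨0, by omega⟩ / μ ⟨d - 1, by omega⟩) / Real.cos γ <
      (Nin : ℝ) / Nout) :
    0 < Real.cos γ * μ ⟨d - 1, by omega⟩ - Real.sqrt Nout * specNorm Xout ∧
    (Nin : ℝ) / (d * (μ ⟨0, by omega⟩ / μ ⟨d - 1, by omega⟩)) ≤ μ ⟨d - 1, by omega⟩ ∧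
    specNorm Xout ≤ Real.sqrt Nout := by
  -- composition and adjoint facts
  have hcomp : Matrix.toEuclideanLin (Xin * Xin.transpose) =
      (Matrix.toEuclideanLin Xin) ∘ₗ (Matrix.toEuclideanLin Xin.transpose) := by
    rw [Matrix.toEuclideanLin_eq_toLin]
    exact Matrix.toLin_mul _ (PiLp.basisFun 2 ℝ (Fin Nin)) _ _ _
  have hadj : Matrix.toEuclideanLin Xin.transpose =
      LinearMap.adjoint (Matrix.toEuclideanLin Xin) := by
    rw [← Matrix.toEuclideanLin_conjTranspose_eq_adjoint,
      Matrix.conjTranspose_eq_transpose_of_trivial]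
  -- μ i = ‖Xᵀ (bb i)‖²
  have hμnorm : ∀ i, μ i = ‖Matrix.toEuclideanLin Xin.transpose (bb i)‖ ^ 2 := by
    intro i
    have h1 : (inner ℝ (bb i) (Matrix.toEuclideanLin (Xin * Xin.transpose) (bb i)) : ℝ)
        = μ i := by
      rw [heig, real_inner_smul_right, real_inner_self_eq_norm_sq, bb.orthonormal.1]
      simp
    rw [← h1, hcomp]
    simp only [LinearMap.coe_comp, Function.comp_apply]
    rw [hadj, ← LinearMap.adjoint_inner_left, real_inner_self_eq_norm_sq]
  have hμnn : ∀ i, 0 ≤ μ i := fun i => (hμnorm i).symm ▸ sq_nonneg _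
  -- range of X' is Lstar
  have hrange : LinearMap.range (Matrix.toEuclideanLin Xin) = Lstar := by
    have hmv : ∀ w : Fin Nin → ℝ, Xin.mulVec w = ∑ j, w j • (fun i => Xin i j) := by
      intro w
      funext i
      simp [Matrix.mulVec, dotProduct, Finset.sum_apply, mul_comm]
    rw [← hXinSpan]
    apply le_antisymm
    · rintro - ⟨v, rfl⟩
      have : Matrix.toEuclideanLin Xin v =
          ∑ j, ((WithLp.equiv 2 (Fin Nin → ℝ)) v j) •
            ((EuclideanSpace.equiv (Fin D) ℝ).symm fun i => Xin i j) := by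
        rw [Matrix.toEuclideanLin_apply, hmv]
        rw [WithLp.toLp_sum]
        simp only [WithLp.toLp_smul]
        rfl
      rw [this]
      exact Submodule.sum_mem _ fun j _ => Submodule.smul_mem _ _
        (Submodule.subset_span ⟨j, rfl⟩)
    · rw [Submodule.span_le]
      rintro - ⟨j, rfl⟩
      refine ⟨(WithLp.equiv 2 (Fin Nin → ℝ)).symm (Pi.single j 1), ?_⟩
      rw [Matrix.toEuclideanLin_apply_piLp_toLp]
      have : Xin.mulVec (Pi.single j 1) = fun i => Xin i j := by
        funext i; simp [Matrix.mulVec_single]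
      exact congrArg (WithLp.toLp 2) this
  -- eigenvectors with nonzero eigenvalue lie in Lstar
  have hmemL : ∀ i, μ i ≠ 0 → bb i ∈ Lstar := by
    intro i hi
    have : bb i = (μ i)⁻¹ • (Matrix.toEuclideanLin (Xin * Xin.transpose) (bb i)) := by
      rw [heig, smul_smul, inv_mul_cancel₀ hi, one_smul]
    rw [this, hcomp]
    exact Submodule.smul_mem _ _ (hrange ▸ LinearMap.mem_range_self _ _)
  -- eigenvectors with zero eigenvalue lie in Lstarᗮ
  have hmemO : ∀ i, μ i = 0 → bb i ∈ Lstarᗮ := by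
    intro i hi
    have hz : Matrix.toEuclideanLin Xin.transpose (bb i) = 0 := by
      have := hμnorm i
      rw [hi] at this
      have := (pow_eq_zero_iff (n := 2) (by norm_num)).mp this.symm
      exact norm_eq_zero.mp this
    rw [Submodule.mem_orthogonal]
    rintro u hu
    rw [← hrange] at hu
    obtain ⟨w, rfl⟩ := hu
    rw [← LinearMap.adjoint_inner_right, ← hadj, hz, inner_zero_right]
  have hfinE : finrank ℝ (EuclideanSpace ℝ (Fin D)) = D := finrank_euclideanSpace_fin
  have hfinO : finrank ℝ (Lstarᗮ) = D - d := by
    have := Submodule.finrank_add_finrank_orthogonal (K := Lstar)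
    rw [hLstar, hfinE] at this
    omega
  -- eigenvalues vanish from index d on
  have hzero : ∀ i : Fin D, d ≤ (i : ℕ) → μ i = 0 := by
    intro i hi
    by_contra hne
    have hipos : 0 < μ i := lt_of_le_of_ne (hμnn i) (Ne.symm hne)
    let e : Fin (d + 1) → Fin D := fun k => ⟨(k : ℕ), by omega⟩
    have hinj : Function.Injective e := by
      intro a b hab
      have h' := congrArg Fin.val hab
      exact Fin.ext h'
    have hli : LinearIndependent ℝ (fun k => bb (e k)) :=
      (bb.orthonormal.comp e hinj).linearIndependent
    have hmem : ∀ k, bb (e k) ∈ Lstar := by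
      intro k
      apply hmemL
      have hle : μ i ≤ μ (e k) := hμ (by rw [Fin.le_def]; show (k : ℕ) ≤ (i : ℕ); omega)
      intro hzero'
      rw [hzero'] at hle
      linarith
    have := stmt10_card_le Lstar _ hli hmem
    rw [hLstar] at this
    omega
  -- μ (d-1) > 0
  have hd1D : d - 1 < D := by omega
  have hlamd_pos : 0 < μ ⟨d - 1, hd1D⟩ := by
    rcases lt_or_eq_of_le (hμnn ⟨d - 1, hd1D⟩) with h | h
    · exact h
    exfalso
    let e : Fin (D - (d - 1)) → Fin D := fun k => ⟨d - 1 + (k : ℕ), by omega⟩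
    have hinj : Function.Injective e := by
      intro a b hab
      have h' : d - 1 + (a : ℕ) = d - 1 + (b : ℕ) := congrArg Fin.val hab
      exact Fin.ext (by omega)
    have hli : LinearIndependent ℝ (fun k => bb (e k)) :=
      (bb.orthonormal.comp e hinj).linearIndependent
    have hmem : ∀ k, bb (e k) ∈ Lstarᗮ := by
      intro k
      apply hmemO
      have h1 : μ (e k) ≤ μ ⟨d - 1, hd1D⟩ :=
        hμ (by rw [Fin.le_def]; show d - 1 ≤ d - 1 + (k : ℕ); omega)
      have h2 : 0 ≤ μ (e k) := hμnn _
      rw [← h] at h1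
      linarith
    have := stmt10_card_le (Lstarᗮ) _ hli hmem
    rw [hfinO] at this
    omega
  -- trace identity : ∑ μ = Nin
  have htrace : ∑ i, μ i = (Nin : ℝ) := by
    have h1 : LinearMap.trace ℝ _ (Matrix.toEuclideanLin (Xin * Xin.transpose))
        = Matrix.trace (Xin * Xin.transpose) := by
      rw [Matrix.toEuclideanLin_eq_toLin,
        LinearMap.trace_eq_matrix_trace ℝ (PiLp.basisFun 2 ℝ (Fin D)), LinearMap.toMatrix_toLin]
    have h2 : LinearMap.trace ℝ _ (Matrix.toEuclideanLin (Xin * Xin.transpose))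
        = ∑ i, μ i := by
      rw [LinearMap.trace_eq_matrix_trace ℝ bb.toBasis]
      simp only [Matrix.trace, Matrix.diag, LinearMap.toMatrix_apply,
        OrthonormalBasis.coe_toBasis, heig]
      simp
    rw [h2] at h1
    rw [h1]
    simp only [Matrix.trace, Matrix.diag, Matrix.mul_apply, Matrix.transpose_apply]
    rw [Finset.sum_comm]
    simp [← sq, hXinUnit]
  -- Nin ≤ d * lam1
  have h0D : 0 < D := by omega
  set lam1 := μ ⟨0, h0D⟩ with hlam1def
  set lamd := μ ⟨d - 1, hd1D⟩ with hlamddef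
  have htr : (Nin : ℝ) ≤ (d : ℝ) * lam1 := by
    classical
    set f : ℕ → ℝ := fun k => if h : k < D then μ ⟨k, h⟩ else 0 with hf
    have hsum : ∑ i, μ i = ∑ k ∈ Finset.range D, f k := by
      rw [← Fin.sum_univ_eq_sum_range]
      apply Finset.sum_congr rfl
      intro i _
      simp [hf, i.isLt]
    have hsub : ∑ k ∈ Finset.range D, f k = ∑ k ∈ Finset.range d, f k := by
      symm
      apply Finset.sum_subset (Finset.range_subset_range.mpr hdD)
      intro k hk hk'
      simp only [Finset.mem_range] at hk hk'
      simp only [hf]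
      rw [dif_pos hk]
      exact hzero ⟨k, hk⟩ (show d ≤ k by omega)
    have hle : ∑ k ∈ Finset.range d, f k ≤ ∑ _k ∈ Finset.range d, lam1 := by
      apply Finset.sum_le_sum
      intro k hk
      simp only [Finset.mem_range] at hk
      have hkD : k < D := by omega
      simp only [hf]
      rw [dif_pos hkD]
      exact hμ (by simp [Fin.mk_le_mk])
    rw [← htrace, hsum, hsub]
    simpa using hle
  have hlam1d : lamd ≤ lam1 := hμ (by simp [Fin.mk_le_mk])
  have hlam1pos : 0 < lam1 := lt_of_lt_of_le hlamd_pos hlam1d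
  have hcos : 0 < Real.cos γ :=
    Real.cos_pos_of_mem_Ioo ⟨by linarith [hγ.1, Real.pi_pos], hγ.2⟩
  have hκpos : 0 < (d : ℝ) * (lam1 / lamd) := by
    have : (0:ℝ) < d := by exact_mod_cast hd
    positivity
  have hNoutpos : (0:ℝ) < (Nout : ℕ) := by exact_mod_cast hNout
  -- claim 2
  have claim2 : (Nin : ℝ) / ((d : ℝ) * (lam1 / lamd)) ≤ lamd := by
    rw [div_le_iff₀ hκpos]
    have : lamd * ((d : ℝ) * (lam1 / lamd)) = (d : ℝ) * lam1 := by
      field_simp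
    rw [this]
    exact htr
  -- claim 3
  have claim3 : specNorm Xout ≤ Real.sqrt Nout := stmt10_specNorm_le Xout hXoutUnit
  -- claim 1
  have hlt : (Nout : ℝ) < Real.cos γ * lamd := by
    have h := (div_lt_div_iff₀ hcos hNoutpos).mp hSNR
    -- h : d * (lam1 / lamd) * Nout < Nin * cos γ
    have h2 : (Nin : ℝ) * Real.cos γ ≤ ((d:ℝ) * lam1) * Real.cos γ :=
      mul_le_mul_of_nonneg_right htr hcos.le
    have heq : (Real.cos γ * lamd) * ((d : ℝ) * (lam1 / lamd)) = ((d:ℝ) * lam1) * Real.cos γ := by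
      field_simp
    have key : (Nout : ℝ) * ((d : ℝ) * (lam1 / lamd))
        < (Real.cos γ * lamd) * ((d : ℝ) * (lam1 / lamd)) := by
      rw [heq]
      calc (Nout : ℝ) * ((d : ℝ) * (lam1 / lamd)) = (d : ℝ) * (lam1 / lamd) * Nout := by ring
        _ < (Nin : ℝ) * Real.cos γ := h
        _ ≤ ((d:ℝ) * lam1) * Real.cos γ := h2
    exact lt_of_mul_lt_mul_right key hκpos.le
  have hsqn : Real.sqrt Nout * specNorm Xout ≤ (Nout : ℝ) := by
    calc Real.sqrt Nout * specNorm Xout ≤ Real.sqrt Nout * Real.sqrt Nout :=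
          mul_le_mul_of_nonneg_left claim3 (Real.sqrt_nonneg _)
      _ = (Nout : ℝ) := Real.mul_self_sqrt (Nat.cast_nonneg _)
  exact ⟨by linarith, claim2, claim3⟩
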